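/- Let T > 1 and δ ∈ (0, 2/log⁴ T). Let M₁, M₂, …, be independent 1-subgaussian real random variables with zero means; set μ̂ₙ = (1/n)·∑_{s=1}^n M_s. Then P(∃ s ≤ log² T : μ̂ₛ + √((2/s)·log((eT/s)·(log²(T/s) + 1))) − δ ≤ 0) ≤ 16e²·log T / T. -/

import Mathlib

set_option maxHeartbeats 1000000

open MeasureTheory ProbabilityTheory Real Finset
open scoped ENNReal




noncomputable def Lf (T r : ℝ) : ℝ :=
  Real.log (Real.exp 1 * T / r * (Real.log (T / r) ^ 2 + 1))

lemma Lf_arg_pos {T r : ℝ} (hT : 0 < T) (hr : 0 < r) :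
    0 < Real.exp 1 * T / r * (Real.log (T / r) ^ 2 + 1) := by positivity

lemma Lf_anti {T r r' : ℝ} (hT : 0 < T) (h1 : 1 ≤ r) (hrr : r ≤ r') (hr'T : r' ≤ T) :
    Lf T r' ≤ Lf T r := by
  have hr : 0 < r := lt_of_lt_of_le one_pos h1
  have hr' : 0 < r' := lt_of_lt_of_le hr hrr
  have h1' : (1:ℝ) ≤ T / r' := (one_le_div hr').mpr hr'T
  have hlog' : 0 ≤ Real.log (T / r') := Real.log_nonneg h1'
  have hlogle : Real.log (T / r') ≤ Real.log (T / r) :=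
    Real.log_le_log (by positivity) (by
      apply div_le_div_of_nonneg_left hT.le hr hrr)
  refine Real.log_le_log (Lf_arg_pos hT hr') ?_
  have h2 : Real.exp 1 * T / r' ≤ Real.exp 1 * T / r :=
    div_le_div_of_nonneg_left (by positivity) hr hrr
  have h3 : Real.log (T / r') ^ 2 + 1 ≤ Real.log (T / r) ^ 2 + 1 := by
    nlinarith
  exact mul_le_mul h2 h3 (by positivity) (by positivity)

lemma Lf_ge_one {T r : ℝ} (h1 : 1 ≤ r) (hrT : r ≤ T) : 1 ≤ Lf T r := by
  have hr : 0 < r := lt_of_lt_of_le one_pos h1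
  have hT : 0 < T := lt_of_lt_of_le hr hrT
  have harg : Real.exp 1 ≤ Real.exp 1 * T / r * (Real.log (T / r) ^ 2 + 1) := by
    have h2 : (1:ℝ) ≤ T / r := (one_le_div hr).mpr hrT
    have : Real.exp 1 * 1 ≤ Real.exp 1 * (T / r) :=
      mul_le_mul_of_nonneg_left h2 (Real.exp_pos 1).le
    have h3 : (1:ℝ) ≤ Real.log (T / r) ^ 2 + 1 := by nlinarith [sq_nonneg (Real.log (T / r))]
    calc Real.exp 1 = Real.exp 1 * 1 * 1 := by ring
      _ ≤ Real.exp 1 * (T / r) * (Real.log (T / r) ^ 2 + 1) := by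
          apply mul_le_mul _ h3 one_pos.le (by positivity)
          simpa using this
      _ = Real.exp 1 * T / r * (Real.log (T / r) ^ 2 + 1) := by ring_nf
  calc (1:ℝ) = Real.log (Real.exp 1) := (Real.log_exp 1).symm
    _ ≤ Lf T r := Real.log_le_log (Real.exp_pos 1) harg

lemma Lf_exp_neg {T r : ℝ} (hT : 0 < T) (hr : 0 < r) :
    Real.exp (-(Lf T r)) = (Real.exp 1 * T / r * (Real.log (T / r) ^ 2 + 1))⁻¹ := by
  rw [Real.exp_neg]
  congr 1
  exact Real.exp_log (Lf_arg_pos hT hr)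

lemma logx_le {x : ℝ} (hx : 6 ≤ x) : Real.log x ≤ 1 + x / 6 := by
  have h6 : Real.log 6 ≤ 2 := by
    have he : (2.7182818283:ℝ) < Real.exp 1 := Real.exp_one_gt_d9
    have h2 : (6:ℝ) ≤ Real.exp 2 := by
      have : Real.exp 2 = Real.exp 1 * Real.exp 1 := by
        rw [← Real.exp_add]; norm_num
      nlinarith
    calc Real.log 6 ≤ Real.log (Real.exp 2) := Real.log_le_log (by norm_num) h2
      _ = 2 := Real.log_exp 2
  have hx0 : (0:ℝ) < x := by linarith
  have : Real.log x = Real.log 6 + Real.log (x / 6) := by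
    rw [← Real.log_mul (by norm_num) (by positivity)]
    congr 1; field_simp
  rw [this]
  have := Real.log_le_sub_one_of_pos (show (0:ℝ) < x / 6 by positivity)
  linarith

lemma exp_ge_quartic {x : ℝ} (hx : 0 ≤ x) : x ^ 4 / 24 ≤ Real.exp x := by
  have h := Real.sum_le_exp_of_nonneg hx 5
  have hexp : (1:ℝ) + x + x ^ 2 / 2 + x ^ 3 / 6 + x ^ 4 / 24 ≤ Real.exp x := by
    convert h using 1
    norm_num [Finset.sum_range_succ, Nat.factorial]
  nlinarith [pow_nonneg hx 2, pow_nonneg hx 3]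

lemma block_bound {x T δ u m q : ℝ} (hx : 6 ≤ x) (hT : T = Real.exp x)
    (hδ0 : 0 < δ) (hδ : δ < 2 / x ^ 4)
    (hq : x - 1 ≤ q)
    (hu1 : 1 ≤ u) (hum : u ≤ m) (hmq : m ≤ (1 + 1 / q) * u)
    (hun : u ≤ x ^ 2) (hmn : m ≤ 7 / 6 * x ^ 2) :
    0 ≤ Real.sqrt (2 * u * Lf T m) - m * δ ∧
    Real.exp (-(Real.sqrt (2 * u * Lf T m) - m * δ) ^ 2 / (2 * m)) ≤
      Real.exp (5 / 2) * ((100 / 9) * m / (Real.exp 1 * T * x ^ 2)) := by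
  have hx0 : (0:ℝ) < x := by linarith
  have hx2 : (36:ℝ) ≤ x ^ 2 := by nlinarith
  have hTpos : 0 < T := by rw [hT]; exact Real.exp_pos x
  have hm0 : (0:ℝ) < m := by linarith
  have hq0 : (0:ℝ) < q := by linarith
  have hxT : Real.log T = x := by rw [hT, Real.log_exp]
  have hquart := exp_ge_quartic hx0.le
  have hmT : m ≤ T := by
    have h1 : (7:ℝ) / 6 * x ^ 2 ≤ x ^ 4 / 24 := by nlinarith
    rw [hT]; linarith
  set L := Lf T m with hLdef
  have hL1 : 1 ≤ L := Lf_ge_one (by linarith) hmT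
  have hlogx := logx_le hx
  have hL2x : L ≤ 2 * x := by
    have hanti : L ≤ Lf T 1 := Lf_anti hTpos le_rfl (by linarith) hmT
    have hLf1 : Lf T 1 = 1 + x + Real.log (x ^ 2 + 1) := by
      unfold Lf
      rw [div_one, div_one, hxT]
      rw [Real.log_mul (by positivity) (by positivity),
        Real.log_mul (Real.exp_ne_zero 1) (by positivity), Real.log_exp, hxT]
    have h1 : Real.log (x ^ 2 + 1) ≤ Real.log (2 * x ^ 2) :=
      Real.log_le_log (by positivity) (by nlinarith)
    have h2 : Real.log (2 * x ^ 2) = Real.log 2 + 2 * Real.log x := by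
      rw [Real.log_mul (by norm_num) (by positivity), Real.log_pow]
      norm_num
    have h3 : Real.log 2 ≤ 1 := by
      calc Real.log 2 ≤ Real.log (Real.exp 1) := by
            refine Real.log_le_log (by norm_num) ?_
            nlinarith [Real.exp_one_gt_d9]
        _ = 1 := Real.log_exp 1
    rw [hLf1] at hanti
    nlinarith
  -- bounds on sqrt
  set R := Real.sqrt (2 * u * L) with hRdef
  have hR0 : 0 ≤ R := Real.sqrt_nonneg _
  have hR2 : R ^ 2 = 2 * u * L := Real.sq_sqrt (by positivity)
  have hR1 : 1 ≤ R := by nlinarith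
  have hRle : R ≤ x ^ 4 / 40 := by
    have h4 : 2 * u * L ≤ 4 * x ^ 3 := by
      have := mul_le_mul hun hL2x (by linarith : (0:ℝ) ≤ L) (by positivity : (0:ℝ) ≤ x ^ 2)
      nlinarith
    have hx5 : (7776:ℝ) ≤ x ^ 5 := by
      calc (7776:ℝ) = 6 ^ 5 := by norm_num
        _ ≤ x ^ 5 := pow_le_pow_left₀ (by norm_num) hx 5
    have h8 : 6400 * x ^ 3 ≤ x ^ 8 := by
      calc 6400 * x ^ 3 ≤ x ^ 5 * x ^ 3 := by nlinarith [pow_pos hx0 3]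
        _ = x ^ 8 := by ring
    have h1 : 2 * u * L ≤ (x ^ 4 / 40) ^ 2 := by
      have : (x ^ 4 / 40) ^ 2 = x ^ 8 / 1600 := by ring
      nlinarith
    calc R ≤ Real.sqrt ((x ^ 4 / 40) ^ 2) := Real.sqrt_le_sqrt h1
      _ = x ^ 4 / 40 := Real.sqrt_sq (by positivity)
  have hmδ : m * δ ≤ 2 * m / x ^ 4 := by
    have := mul_le_mul_of_nonneg_left hδ.le hm0.le
    calc m * δ ≤ m * (2 / x ^ 4) := this
      _ = 2 * m / x ^ 4 := by ring
  have hmδ1 : m * δ ≤ 1 := by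
    have h1 : 2 * m / x ^ 4 ≤ 2 * (7 / 6 * x ^ 2) / x ^ 4 := by
      gcongr
    have h2 : 2 * (7 / 6 * x ^ 2) / x ^ 4 = 7 / 3 / x ^ 2 := by
      field_simp; ring
    have h3 : (7:ℝ) / 3 / x ^ 2 ≤ 7 / 3 / 36 :=
      div_le_div_of_nonneg_left (by norm_num) (by norm_num) hx2
    linarith
  have ha0 : 0 ≤ R - m * δ := by linarith
  refine ⟨ha0, ?_⟩
  -- exponent inequality
  have hmu : m - u ≤ 6 / (5 * x) * m := by
    have h1 : m - u ≤ u / q := by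
      have : (1 + 1 / q) * u = u + u / q := by field_simp
      linarith [hmq.trans_eq this]
    have h2 : u / q ≤ m / q := by gcongr
    have h3 : m / q ≤ 6 / (5 * x) * m := by
      rw [div_le_iff₀ hq0]
      have : 5 * x ≤ 6 * q := by linarith
      have h5x : (0:ℝ) < 5 * x := by positivity
      rw [div_mul_eq_mul_div, div_mul_eq_mul_div, le_div_iff₀ h5x]
      nlinarith
    linarith
  have hterm1 : 2 * L * (m - u) ≤ 24 / 5 * m := by
    have hmu0 : 0 ≤ m - u := by linarith
    have := mul_le_mul hL2x hmu (by linarith) (by positivity : (0:ℝ) ≤ 2 * x)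
    have heq : 2 * x * (6 / (5 * x) * m) = 12 / 5 * m := by
      field_simp; ring
    nlinarith
  have hterm2 : 2 * R * (m * δ) ≤ m / 10 := by
    have h1 : R * (m * δ) ≤ x ^ 4 / 40 * (2 * m / x ^ 4) := by
      apply mul_le_mul hRle hmδ (by positivity) (by positivity)
    have h2 : x ^ 4 / 40 * (2 * m / x ^ 4) = m / 20 := by
      field_simp; ring
    nlinarith
  have hkey : 2 * m * (L - 5 / 2) ≤ (R - m * δ) ^ 2 := by
    linarith [hterm1, hterm2, hR2, sq_nonneg (m * δ)]
  have hexpo : -(R - m * δ) ^ 2 / (2 * m) ≤ 5 / 2 - L := by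
    rw [div_le_iff₀ (by positivity : (0:ℝ) < 2 * m)]
    linarith [hkey]
  -- bound on exp(-L)
  have hlogm : Real.log m ≤ 7 / 10 * x := by
    have h1 : Real.log m ≤ Real.log (7 / 6 * x ^ 2) := Real.log_le_log hm0 hmn
    have h2 : Real.log (7 / 6 * x ^ 2) = Real.log (7 / 6) + 2 * Real.log x := by
      rw [Real.log_mul (by norm_num) (by positivity), Real.log_pow]
      norm_num
    have h3 : Real.log (7 / 6) ≤ 1 / 6 := by
      have := Real.log_le_sub_one_of_pos (show (0:ℝ) < 7 / 6 by norm_num)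
      linarith
    nlinarith
  have hlTm : Real.log (T / m) = x - Real.log m := by
    rw [Real.log_div (ne_of_gt hTpos) (ne_of_gt hm0), hxT]
  have hl3 : 3 / 10 * x ≤ Real.log (T / m) := by rw [hlTm]; linarith
  have hexpnegL : Real.exp (-L) ≤ 100 / 9 * m / (Real.exp 1 * T * x ^ 2) := by
    have heq := Lf_exp_neg hTpos hm0 (r := m) (T := T)
    have hsq : 9 / 100 * x ^ 2 ≤ Real.log (T / m) ^ 2 + 1 := by
      nlinarith [hl3, sq_nonneg (Real.log (T / m))]
    have hB : Real.exp 1 * T / m * (9 / 100 * x ^ 2) ≤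
        Real.exp 1 * T / m * (Real.log (T / m) ^ 2 + 1) := by
      apply mul_le_mul_of_nonneg_left hsq (by positivity)
    have hBpos : (0:ℝ) < Real.exp 1 * T / m * (9 / 100 * x ^ 2) := by positivity
    have hinv : (Real.exp 1 * T / m * (Real.log (T / m) ^ 2 + 1))⁻¹ ≤
        (Real.exp 1 * T / m * (9 / 100 * x ^ 2))⁻¹ := by
      apply inv_anti₀ hBpos hB
    have heq2 : (Real.exp 1 * T / m * (9 / 100 * x ^ 2))⁻¹ =
        100 / 9 * m / (Real.exp 1 * T * x ^ 2) := by
      field_simp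
    calc Real.exp (-L) = (Real.exp 1 * T / m * (Real.log (T / m) ^ 2 + 1))⁻¹ := by
          rw [← heq]
      _ ≤ _ := hinv.trans_eq heq2
  calc Real.exp (-(R - m * δ) ^ 2 / (2 * m)) ≤ Real.exp (5 / 2 - L) :=
        Real.exp_le_exp.mpr hexpo
    _ = Real.exp (5 / 2) * Real.exp (-L) := by rw [← Real.exp_add]; ring_nf
    _ ≤ Real.exp (5 / 2) * (100 / 9 * m / (Real.exp 1 * T * x ^ 2)) := by
        apply mul_le_mul_of_nonneg_left hexpnegL (Real.exp_pos _).le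


def useq (q : ℕ) : ℕ → ℕ
  | 0 => 1
  | k + 1 => useq q k + 1 + useq q k / q

lemma useq_zero (q : ℕ) : useq q 0 = 1 := rfl
lemma useq_succ (q k : ℕ) : useq q (k + 1) = useq q k + 1 + useq q k / q := rfl

lemma useq_pos (q k : ℕ) : 1 ≤ useq q k := by
  induction k with
  | zero => simp [useq]
  | succ k ih =>
      rw [useq_succ]
      exact le_trans (Nat.le_add_left 1 _) (Nat.le_add_right _ _)

lemma useq_strictMono (q : ℕ) : StrictMono (useq q) :=
  strictMono_nat_of_lt_succ (fun k => by
    rw [useq_succ]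
    exact lt_of_lt_of_le (Nat.lt_succ_self _) (Nat.le_add_right _ _))

lemma useq_ge (q k : ℕ) : k + 1 ≤ useq q k := by
  induction k with
  | zero => simp [useq]
  | succ k ih =>
      rw [useq_succ]
      exact le_trans (Nat.add_le_add_right ih 1) (Nat.le_add_right _ _)

lemma useq_incr_le (q k : ℕ) (hq : 1 ≤ q) :
    (useq q k : ℝ) ≤ (q : ℝ) * ((useq q (k + 1) : ℝ) - useq q k) := by
  set u := useq q k
  have h1 : useq q (k + 1) - u = 1 + u / q := by
    rw [useq_succ, Nat.add_assoc, Nat.add_sub_cancel_left]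
  have h2 : ((useq q (k + 1) : ℝ)) - u = ((useq q (k + 1) - u : ℕ) : ℝ) := by
    rw [Nat.cast_sub ((useq_strictMono q (Nat.lt_succ_self k)).le)]
  rw [h2, h1]
  have h3 : u < q * (1 + u / q) := by
    have hm : u % q < q := Nat.mod_lt u hq
    calc u = q * (u / q) + u % q := (Nat.div_add_mod u q).symm
      _ < q * (u / q) + q := Nat.add_lt_add_left hm _
      _ = q * (1 + u / q) := by ring
  exact_mod_cast h3.le

lemma useq_m_le (q k : ℕ) (hq : 1 ≤ q) :
    ((useq q (k + 1) : ℝ)) - 1 ≤ (1 + 1 / (q : ℝ)) * useq q k := by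
  have hq0 : (0:ℝ) < q := by exact_mod_cast hq
  have h1 : ((useq q k / q : ℕ) : ℝ) ≤ (useq q k : ℝ) / q := Nat.cast_div_le
  have h2 : (useq q (k + 1) : ℝ) = (useq q k : ℝ) + 1 + ((useq q k / q : ℕ) : ℝ) := by
    rw [useq_succ]; push_cast; ring
  rw [h2]
  have : (1 + 1 / (q:ℝ)) * useq q k = useq q k + (useq q k : ℝ) / q := by
    field_simp
  rw [this]
  linarith

lemma trivial_case {x : ℝ} (h1 : 1 ≤ x) (h6 : x ≤ 6) : Real.exp x ≤ 16 * Real.exp 2 * x := by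
  have key : Real.exp x ≤ (6 - x) / 5 * Real.exp 1 + (x - 1) / 5 * Real.exp 6 := by
    have hc := convexOn_exp.2 (Set.mem_univ (1:ℝ)) (Set.mem_univ (6:ℝ))
      (show (0:ℝ) ≤ (6 - x) / 5 by linarith) (show (0:ℝ) ≤ (x - 1) / 5 by linarith)
      (show (6 - x) / 5 + (x - 1) / 5 = 1 by ring)
    have hxx : (6 - x) / 5 * 1 + (x - 1) / 5 * 6 = x := by ring
    rw [smul_eq_mul, smul_eq_mul, smul_eq_mul, smul_eq_mul, hxx] at hc
    exact hc
  have he1 : (2.7182818283:ℝ) < Real.exp 1 := Real.exp_one_gt_d9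
  have he2 : Real.exp 1 < 2.7182818286 := Real.exp_one_lt_d9
  have h2 : Real.exp 2 = Real.exp 1 * Real.exp 1 := by rw [← Real.exp_add]; norm_num
  have h6e : Real.exp 6 = Real.exp 2 * Real.exp 2 * Real.exp 2 := by
    rw [← Real.exp_add, ← Real.exp_add]; norm_num
  have hlow2 : (7.389056:ℝ) ≤ Real.exp 2 := by nlinarith
  have hup2 : Real.exp 2 ≤ 7.3890561 := by nlinarith
  have hup6 : Real.exp 6 ≤ 403.4288 := by nlinarith
  have hxe : 16 * 7.389056 * x ≤ 16 * Real.exp 2 * x := by nlinarith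
  nlinarith [he2]


section Core
variable {Ω : Type*} [MeasurableSpace Ω] {μ : Measure Ω} [IsProbabilityMeasure μ]
  {M : ℕ → Ω → ℝ}

theorem core_int (hmeas : ∀ i, Measurable (M i))
    (hindep : iIndepFun M μ)
    (hs : ∀ i (l : ℝ), Integrable (fun ω => Real.exp (l * M i ω)) μ)
    (t : ℝ) (F : Finset ℕ) :
    Integrable (fun ω => Real.exp (t * ∑ i ∈ F, M i ω)) μ := by
  have h := hindep.integrable_exp_mul_sum (t := t) hmeas (s := F) (fun i _ => hs i t)
  simpa [Finset.sum_apply] using h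

theorem core_mgf (hmeas : ∀ i, Measurable (M i))
    (hindep : iIndepFun M μ)
    (hs : ∀ i (l : ℝ), (∫ ω, Real.exp (l * M i ω) ∂μ) ≤ Real.exp (l ^ 2 / 2))
    (t : ℝ) (F : Finset ℕ) :
    (∫ ω, Real.exp (t * ∑ i ∈ F, M i ω) ∂μ) ≤ Real.exp (F.card * (t ^ 2 / 2)) := by
  have h := hindep.mgf_sum (t := t) hmeas F
  have h2 : mgf (∑ i ∈ F, M i) μ t = ∫ ω, Real.exp (t * ∑ i ∈ F, M i ω) ∂μ := by
    unfold mgf; simp [Finset.sum_apply]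
  rw [← h2, h]
  calc ∏ i ∈ F, mgf (M i) μ t ≤ ∏ i ∈ F, Real.exp (t ^ 2 / 2) := by
        refine Finset.prod_le_prod (fun i _ => mgf_nonneg) (fun i _ => ?_)
        exact hs i t
    _ = Real.exp (F.card * (t ^ 2 / 2)) := by
        rw [Finset.prod_const, ← Real.exp_nat_mul]

theorem core_one_le (hint : ∀ i, Integrable (M i) μ)
    (hzero : ∀ i, (∫ ω, M i ω ∂μ) = 0)
    (t : ℝ) (F : Finset ℕ)
    (hI : Integrable (fun ω => Real.exp (t * ∑ i ∈ F, M i ω)) μ) :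
    1 ≤ ∫ ω, Real.exp (t * ∑ i ∈ F, M i ω) ∂μ := by
  have hintS : Integrable (fun ω => 1 + t * ∑ i ∈ F, M i ω) μ := by
    refine (integrable_const 1).add (Integrable.const_mul ?_ t)
    exact integrable_finset_sum F (fun i _ => hint i)
  have hmono : (∫ ω, (1 + t * ∑ i ∈ F, M i ω) ∂μ) ≤ ∫ ω, Real.exp (t * ∑ i ∈ F, M i ω) ∂μ := by
    refine integral_mono hintS hI (fun ω => ?_)
    have := Real.add_one_le_exp (t * ∑ i ∈ F, M i ω)
    linarith
  have heq : (∫ ω, (1 + t * ∑ i ∈ F, M i ω) ∂μ) = 1 := by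
    rw [integral_add (integrable_const 1) (Integrable.const_mul (integrable_finset_sum F (fun i _ => hint i)) t)]
    rw [MeasureTheory.integral_const_mul, integral_finset_sum F (fun i _ => hint i)]
    simp [hzero]
  linarith

end Core


section Core
variable {Ω : Type*} [MeasurableSpace Ω] {μ : Measure Ω} [IsProbabilityMeasure μ]
  {M : ℕ → Ω → ℝ}

-- independence of the "past" functional and the "future" sum
theorem core_indep (hmeas : ∀ i, Measurable (M i))
    (hindep : iIndepFun M μ)
    (s m : ℕ) (a t : ℝ)
    (B : Set Ω)
    (hB : B = {ω | (∑ i ∈ Finset.range s, M i ω) ≤ -a ∧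
        ∀ j, 1 ≤ j → j < s → -a < ∑ i ∈ Finset.range j, M i ω}) :
    IndepFun (B.indicator (fun ω => Real.exp (t * ∑ i ∈ Finset.range s, M i ω)))
      (fun ω => Real.exp (t * ∑ i ∈ Finset.Ico s m, M i ω)) μ := by
  classical
  have hpair := hindep.indepFun_finset (Finset.range s) (Finset.Ico s m)
    (by simp [Finset.disjoint_left]; omega) hmeas
  -- past functionals
  set SS : ℕ → ({ x // x ∈ Finset.range s } → ℝ) → ℝ :=
    fun j v => ∑ i ∈ (Finset.range s).attach, if (i : ℕ) < j then v i else 0 with hSS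
  have hSSmeas : ∀ j, Measurable (SS j) := by
    intro j
    refine Finset.measurable_sum _ (fun i _ => ?_)
    by_cases h : (i : ℕ) < j
    · simpa [h] using measurable_pi_apply i
    · simpa [h] using measurable_const
  have hSSval : ∀ (j : ℕ), j ≤ s → ∀ ω, SS j (fun i : { x // x ∈ Finset.range s } => M i ω)
      = ∑ i ∈ Finset.range j, M i ω := by
    intro j hj ω
    rw [hSS]
    calc (∑ i ∈ (Finset.range s).attach, if (i : ℕ) < j then M i ω else 0)
        = ∑ i ∈ Finset.range s, if i < j then M i ω else 0 :=
          Finset.sum_attach (Finset.range s) (fun i => if i < j then M i ω else 0)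
      _ = ∑ i ∈ (Finset.range s).filter (· < j), M i ω := by rw [Finset.sum_filter]
      _ = ∑ i ∈ Finset.range j, M i ω := by
          congr 1
          ext i
          simp only [Finset.mem_filter, Finset.mem_range]
          omega
  -- the set in coordinate space
  set A : Set ({ x // x ∈ Finset.range s } → ℝ) :=
    {v | SS s v ≤ -a ∧ ∀ j, 1 ≤ j → j < s → -a < SS j v} with hA
  have hAmeas : MeasurableSet A := by
    rw [hA]
    have h1 : MeasurableSet {v : { x // x ∈ Finset.range s } → ℝ | SS s v ≤ -a} :=
      measurableSet_le (hSSmeas s) measurable_const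
    have h2 : MeasurableSet {v : { x // x ∈ Finset.range s } → ℝ |
        ∀ j, 1 ≤ j → j < s → -a < SS j v} := by
      have : {v : { x // x ∈ Finset.range s } → ℝ | ∀ j, 1 ≤ j → j < s → -a < SS j v}
          = ⋂ (j : ℕ) (_ : 1 ≤ j) (_ : j < s), {v | -a < SS j v} := by
        ext v; simp [Set.mem_iInter]
      rw [this]
      exact MeasurableSet.iInter (fun j => MeasurableSet.iInter (fun _ =>
        MeasurableSet.iInter (fun _ => measurableSet_lt measurable_const (hSSmeas j))))
    exact h1.inter h2
  set Φ : ({ x // x ∈ Finset.range s } → ℝ) → ℝ :=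
    A.indicator (fun v => Real.exp (t * SS s v)) with hΦ
  have hΦmeas : Measurable Φ :=
    Measurable.indicator (Real.measurable_exp.comp ((hSSmeas s).const_mul t)) hAmeas
  set Ψ : ({ x // x ∈ Finset.Ico s m } → ℝ) → ℝ :=
    fun w => Real.exp (t * ∑ i ∈ (Finset.Ico s m).attach, w i) with hΨ
  have hΨmeas : Measurable Ψ := by
    refine Real.measurable_exp.comp (Measurable.const_mul ?_ t)
    exact Finset.measurable_sum _ (fun i _ => measurable_pi_apply i)
  have hcomp := hpair.comp hΦmeas hΨmeas
  have he1 : (Φ ∘ fun ω (i : { x // x ∈ Finset.range s }) => M i ω)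
      = B.indicator (fun ω => Real.exp (t * ∑ i ∈ Finset.range s, M i ω)) := by
    funext ω
    have hmem : (fun i : { x // x ∈ Finset.range s } => M i ω) ∈ A ↔ ω ∈ B := by
      rw [hA, hB]
      simp only [Set.mem_setOf_eq]
      constructor
      · rintro ⟨h1, h2⟩
        refine ⟨by rwa [hSSval s le_rfl ω] at h1, fun j hj1 hj2 => ?_⟩
        have := h2 j hj1 hj2
        rwa [hSSval j (le_of_lt hj2) ω] at this
      · rintro ⟨h1, h2⟩
        refine ⟨by rwa [hSSval s le_rfl ω], fun j hj1 hj2 => ?_⟩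
        rw [hSSval j (le_of_lt hj2) ω]
        exact h2 j hj1 hj2
    by_cases h : ω ∈ B
    · simp only [Function.comp_apply, hΦ]
      rw [Set.indicator_of_mem (hmem.mpr h), Set.indicator_of_mem h, hSSval s le_rfl ω]
    · simp only [Function.comp_apply, hΦ]
      rw [Set.indicator_of_notMem (fun hc => h (hmem.mp hc)), Set.indicator_of_notMem h]
  have he2 : (Ψ ∘ fun ω (i : { x // x ∈ Finset.Ico s m }) => M i ω)
      = fun ω => Real.exp (t * ∑ i ∈ Finset.Ico s m, M i ω) := by
    funext ω
    simp only [Function.comp_apply, hΨ]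
    rw [Finset.sum_attach (Finset.Ico s m) (fun i => M i ω)]
  rwa [he1, he2] at hcomp

end Core


section Core3
variable {Ω : Type*} [MeasurableSpace Ω] {μ : Measure Ω} [IsProbabilityMeasure μ]
  {M : ℕ → Ω → ℝ}

theorem core_int' (hmeas : ∀ i, Measurable (M i))
    (hindep : iIndepFun M μ)
    (hs : ∀ i (l : ℝ), Integrable (fun ω => Real.exp (l * M i ω)) μ)
    (t : ℝ) (F : Finset ℕ) :
    Integrable (fun ω => Real.exp (t * ∑ i ∈ F, M i ω)) μ := by
  have h := hindep.integrable_exp_mul_sum (t := t) hmeas (s := F) (fun i _ => hs i t)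
  simpa [Finset.sum_apply] using h

theorem core_maximal (hmeas : ∀ i, Measurable (M i))
    (hindep : iIndepFun M μ)
    (hint : ∀ i, Integrable (M i) μ) (hzero : ∀ i, (∫ ω, M i ω ∂μ) = 0)
    (hs : ∀ i (l : ℝ), Integrable (fun ω => Real.exp (l * M i ω)) μ)
    (hs2 : ∀ i (l : ℝ), (∫ ω, Real.exp (l * M i ω) ∂μ) ≤ Real.exp (l ^ 2 / 2))
    (m : ℕ) (hm : 1 ≤ m) (a : ℝ) (ha : 0 ≤ a)
    (core_int : ∀ (t : ℝ) (F : Finset ℕ),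
      Integrable (fun ω => Real.exp (t * ∑ i ∈ F, M i ω)) μ)
    (core_mgf : ∀ (t : ℝ) (F : Finset ℕ),
      (∫ ω, Real.exp (t * ∑ i ∈ F, M i ω) ∂μ) ≤ Real.exp (F.card * (t ^ 2 / 2)))
    (core_one_le : ∀ (t : ℝ) (F : Finset ℕ),
      1 ≤ ∫ ω, Real.exp (t * ∑ i ∈ F, M i ω) ∂μ)
    (core_indep : ∀ (s m : ℕ) (a t : ℝ) (B : Set Ω),
      B = {ω | (∑ i ∈ Finset.range s, M i ω) ≤ -a ∧
        ∀ j, 1 ≤ j → j < s → -a < ∑ i ∈ Finset.range j, M i ω} →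
      IndepFun (B.indicator (fun ω => Real.exp (t * ∑ i ∈ Finset.range s, M i ω)))
        (fun ω => Real.exp (t * ∑ i ∈ Finset.Ico s m, M i ω)) μ) :
    μ {ω | ∃ s, 1 ≤ s ∧ s ≤ m ∧ (∑ i ∈ Finset.range s, M i ω) ≤ -a}
      ≤ ENNReal.ofReal (Real.exp (-(a ^ 2) / (2 * m))) := by
  classical
  set t : ℝ := -(a / m) with ht
  set B : ℕ → Set Ω := fun s => {ω | (∑ i ∈ Finset.range s, M i ω) ≤ -a ∧
      ∀ j, 1 ≤ j → j < s → -a < ∑ i ∈ Finset.range j, M i ω} with hBdef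
  have hSmeas : ∀ s, Measurable (fun ω => ∑ i ∈ Finset.range s, M i ω) := fun s =>
    Finset.measurable_sum _ (fun i _ => hmeas i)
  have hBmeas : ∀ s, MeasurableSet (B s) := by
    intro s
    have h1 : MeasurableSet {ω | (∑ i ∈ Finset.range s, M i ω) ≤ -a} :=
      measurableSet_le (hSmeas s) measurable_const
    have h2 : MeasurableSet {ω | ∀ j, 1 ≤ j → j < s → -a < ∑ i ∈ Finset.range j, M i ω} := by
      have : {ω | ∀ j, 1 ≤ j → j < s → -a < ∑ i ∈ Finset.range j, M i ω}
          = ⋂ (j : ℕ) (_ : 1 ≤ j) (_ : j < s), {ω | -a < ∑ i ∈ Finset.range j, M i ω} := by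
        ext ω; simp [Set.mem_iInter]
      rw [this]
      exact MeasurableSet.iInter (fun j => MeasurableSet.iInter (fun _ =>
        MeasurableSet.iInter (fun _ => measurableSet_lt measurable_const (hSmeas j))))
    exact h1.inter h2
  -- inclusion into disjoint union
  have hincl : {ω | ∃ s, 1 ≤ s ∧ s ≤ m ∧ (∑ i ∈ Finset.range s, M i ω) ≤ -a}
      ⊆ ⋃ s ∈ Finset.Icc 1 m, B s := by
    intro ω hω
    have hex : ∃ s, 1 ≤ s ∧ s ≤ m ∧ (∑ i ∈ Finset.range s, M i ω) ≤ -a := hω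
    set s₀ := Nat.find hex with hs₀
    obtain ⟨h1, h2, h3⟩ := Nat.find_spec hex
    refine Set.mem_biUnion (Finset.mem_Icc.mpr ⟨h1, h2⟩) ?_
    refine ⟨h3, fun j hj1 hj2 => ?_⟩
    by_contra hc
    push_neg at hc
    exact Nat.find_min hex hj2 ⟨hj1, by omega, hc⟩
  -- pairwise disjoint
  have hdisj : (↑(Finset.Icc 1 m) : Set ℕ).PairwiseDisjoint B := by
    intro s hs s' hs' hne
    simp only [Finset.coe_Icc, Set.mem_Icc] at hs hs'
    rcases Nat.lt_or_ge s s' with h | h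
    · refine Set.disjoint_left.mpr (fun ω hω hω' => ?_)
      exact absurd hω.1 (not_le.mpr (hω'.2 s hs.1 h))
    · have h' : s' < s := by omega
      refine Set.disjoint_left.mpr (fun ω hω hω' => ?_)
      exact absurd hω'.1 (not_le.mpr (hω.2 s' hs'.1 h'))
  -- per-s inequality chain in ℝ
  have hmR : (0 : ℝ) < m := by exact_mod_cast hm
  have hkey : ∀ s ∈ Finset.Icc 1 m,
      Real.exp (a / m * a) * (μ (B s)).toReal
        ≤ ∫ ω in B s, Real.exp (t * ∑ i ∈ Finset.range m, M i ω) ∂μ := by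
    intro s hs
    simp only [Finset.mem_Icc] at hs
    have hInt_s : Integrable (fun ω => Real.exp (t * ∑ i ∈ Finset.range s, M i ω)) μ :=
      core_int t (Finset.range s)
    have hInt_m : Integrable (fun ω => Real.exp (t * ∑ i ∈ Finset.Ico s m, M i ω)) μ :=
      core_int t (Finset.Ico s m)
    -- step 1 : constant below
    have step1 : Real.exp (a / m * a) * (μ (B s)).toReal
        ≤ ∫ ω in B s, Real.exp (t * ∑ i ∈ Finset.range s, M i ω) ∂μ := by
      have hconst : ∫ ω in B s, (Real.exp (a / m * a)) ∂μ
          = Real.exp (a / m * a) * (μ (B s)).toReal := by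
        rw [setIntegral_const]; rw [smul_eq_mul, measureReal_def]; ring
      rw [← hconst]
      refine setIntegral_mono_on (integrableOn_const (measure_ne_top μ _))
        (hInt_s.integrableOn) (hBmeas s) (fun ω hω => ?_)
      have hS : (∑ i ∈ Finset.range s, M i ω) ≤ -a := hω.1
      have : a / m * a ≤ t * ∑ i ∈ Finset.range s, M i ω := by
        rw [ht]
        have hnn : (0:ℝ) ≤ a / m := by positivity
        nlinarith
      exact Real.exp_le_exp.mpr this
    -- step 2 : multiply by future integral (≥ 1)
    have hI2 : 1 ≤ ∫ ω, Real.exp (t * ∑ i ∈ Finset.Ico s m, M i ω) ∂μ :=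
      core_one_le t (Finset.Ico s m)
    have hnn_set : 0 ≤ ∫ ω in B s, Real.exp (t * ∑ i ∈ Finset.range s, M i ω) ∂μ :=
      setIntegral_nonneg (hBmeas s) (fun ω _ => (Real.exp_pos _).le)
    have step2 : (∫ ω in B s, Real.exp (t * ∑ i ∈ Finset.range s, M i ω) ∂μ)
        ≤ (∫ ω in B s, Real.exp (t * ∑ i ∈ Finset.range s, M i ω) ∂μ)
          * ∫ ω, Real.exp (t * ∑ i ∈ Finset.Ico s m, M i ω) ∂μ := by
      nlinarith
    -- step 3 : independence product
    have hindepf := core_indep s m a t (B s) (by rw [hBdef])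
    have hIndInt : Integrable ((B s).indicator
        (fun ω => Real.exp (t * ∑ i ∈ Finset.range s, M i ω))) μ :=
      hInt_s.indicator (hBmeas s)
    have step3 := hindepf.integral_fun_mul_eq_mul_integral hIndInt.aestronglyMeasurable hInt_m.aestronglyMeasurable
    have hprod : (fun ω => (B s).indicator
          (fun ω' => Real.exp (t * ∑ i ∈ Finset.range s, M i ω')) ω
          * Real.exp (t * ∑ i ∈ Finset.Ico s m, M i ω))
        = (B s).indicator (fun ω => Real.exp (t * ∑ i ∈ Finset.range m, M i ω)) := by
      funext ω
      by_cases h : ω ∈ B s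
      · rw [Set.indicator_of_mem h, Set.indicator_of_mem h, ← Real.exp_add, ← mul_add,
          Finset.sum_range_add_sum_Ico _ hs.2]
      · rw [Set.indicator_of_notMem h, Set.indicator_of_notMem h, zero_mul]
    have hindint : ∫ ω, (B s).indicator
          (fun ω' => Real.exp (t * ∑ i ∈ Finset.range s, M i ω')) ω ∂μ
        = ∫ ω in B s, Real.exp (t * ∑ i ∈ Finset.range s, M i ω) ∂μ :=
      integral_indicator (hBmeas s)
    have hindint2 : ∫ ω, (B s).indicator
          (fun ω' => Real.exp (t * ∑ i ∈ Finset.range m, M i ω')) ω ∂μ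
        = ∫ ω in B s, Real.exp (t * ∑ i ∈ Finset.range m, M i ω) ∂μ :=
      integral_indicator (hBmeas s)
    calc Real.exp (a / m * a) * (μ (B s)).toReal
        ≤ ∫ ω in B s, Real.exp (t * ∑ i ∈ Finset.range s, M i ω) ∂μ := step1
      _ ≤ (∫ ω in B s, Real.exp (t * ∑ i ∈ Finset.range s, M i ω) ∂μ)
          * ∫ ω, Real.exp (t * ∑ i ∈ Finset.Ico s m, M i ω) ∂μ := step2
      _ = (∫ ω, (B s).indicator (fun ω' => Real.exp (t * ∑ i ∈ Finset.range s, M i ω')) ω ∂μ)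
          * ∫ ω, Real.exp (t * ∑ i ∈ Finset.Ico s m, M i ω) ∂μ := by rw [hindint]
      _ = ∫ ω, ((B s).indicator (fun ω' => Real.exp (t * ∑ i ∈ Finset.range s, M i ω')) ω
          * Real.exp (t * ∑ i ∈ Finset.Ico s m, M i ω)) ∂μ := step3.symm
      _ = ∫ ω in B s, Real.exp (t * ∑ i ∈ Finset.range m, M i ω) ∂μ := by
          rw [← hindint2]; exact congrArg (integral μ) hprod
  -- sum up
  have hsum : Real.exp (a / m * a) * ∑ s ∈ Finset.Icc 1 m, (μ (B s)).toReal
      ≤ Real.exp (m * (t ^ 2 / 2)) := by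
    have h1 : Real.exp (a / m * a) * ∑ s ∈ Finset.Icc 1 m, (μ (B s)).toReal
        ≤ ∑ s ∈ Finset.Icc 1 m, ∫ ω in B s, Real.exp (t * ∑ i ∈ Finset.range m, M i ω) ∂μ := by
      rw [Finset.mul_sum]
      exact Finset.sum_le_sum (fun s hs => hkey s hs)
    have h2 : ∑ s ∈ Finset.Icc 1 m, ∫ ω in B s, Real.exp (t * ∑ i ∈ Finset.range m, M i ω) ∂μ
        = ∫ ω in (⋃ s ∈ Finset.Icc 1 m, B s), Real.exp (t * ∑ i ∈ Finset.range m, M i ω) ∂μ := by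
      rw [integral_biUnion_finset _ (fun s _ => hBmeas s) hdisj
        (fun s _ => (core_int t (Finset.range m)).integrableOn)]
    have h3 : ∫ ω in (⋃ s ∈ Finset.Icc 1 m, B s), Real.exp (t * ∑ i ∈ Finset.range m, M i ω) ∂μ
        ≤ ∫ ω, Real.exp (t * ∑ i ∈ Finset.range m, M i ω) ∂μ :=
      setIntegral_le_integral (core_int t (Finset.range m))
        (Filter.Eventually.of_forall (fun ω => (Real.exp_pos _).le))
    have h4 := core_mgf t (Finset.range m)
    rw [Finset.card_range] at h4
    rw [← h2] at h3
    linarith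
  -- finish in ENNReal
  have hfinal : ∑ s ∈ Finset.Icc 1 m, (μ (B s)).toReal ≤ Real.exp (-(a ^ 2) / (2 * m)) := by
    have hexp : Real.exp (m * (t ^ 2 / 2)) / Real.exp (a / m * a)
        = Real.exp (-(a ^ 2) / (2 * m)) := by
      rw [← Real.exp_sub]
      congr 1
      rw [ht]
      field_simp
      ring
    rw [← hexp, le_div_iff₀ (Real.exp_pos _)]
    rw [mul_comm] at hsum
    exact hsum
  calc μ {ω | ∃ s, 1 ≤ s ∧ s ≤ m ∧ (∑ i ∈ Finset.range s, M i ω) ≤ -a}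
      ≤ μ (⋃ s ∈ Finset.Icc 1 m, B s) := measure_mono hincl
    _ ≤ ∑ s ∈ Finset.Icc 1 m, μ (B s) := measure_biUnion_finset_le _ _
    _ = ENNReal.ofReal (∑ s ∈ Finset.Icc 1 m, (μ (B s)).toReal) := by
        rw [ENNReal.ofReal_sum_of_nonneg (fun s _ => ENNReal.toReal_nonneg)]
        refine Finset.sum_congr rfl (fun s _ => ?_)
        rw [ENNReal.ofReal_toReal (measure_ne_top μ _)]
    _ ≤ ENNReal.ofReal (Real.exp (-(a ^ 2) / (2 * m))) := ENNReal.ofReal_le_ofReal hfinal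

end Core3

def IsOneSubgaussian {Ω : Type*} [MeasurableSpace Ω] (μ : Measure Ω) (Z : Ω → ℝ) : Prop :=
  Integrable Z μ ∧ ∀ l : ℝ,
    Integrable (fun ω => Real.exp (l * Z ω - l * (∫ ω', Z ω' ∂μ))) μ ∧
    (∫ ω, Real.exp (l * Z ω - l * (∫ ω', Z ω' ∂μ)) ∂μ) ≤ Real.exp (l ^ 2 / 2)

theorem stmt5 {Ω : Type*} [MeasurableSpace Ω] (μ : Measure Ω) [IsProbabilityMeasure μ]
    (M : ℕ → Ω → ℝ) (hmeas : ∀ i, Measurable (M i))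
    (hindep : iIndepFun M μ)
    (hsub : ∀ i, IsOneSubgaussian μ (M i))
    (hmean : ∀ i, (∫ ω, M i ω ∂μ) = 0)
    (T : ℝ) (hT : 1 < T)
    (δ : ℝ) (hδ : δ ∈ Set.Ioo (0 : ℝ) (2 / Real.log T ^ 4)) :
    μ {ω | ∃ s : ℕ, 1 ≤ s ∧ (s : ℝ) ≤ Real.log T ^ 2 ∧
        (∑ i ∈ Finset.range s, M i ω) / s
          + Real.sqrt ((2 / s) * Real.log ((Real.exp 1 * T / s)
            * (Real.log (T / s) ^ 2 + 1))) - δ ≤ 0} ≤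
      ENNReal.ofReal (16 * Real.exp 2 * Real.log T / T) := by
  obtain ⟨hδ0, hδ2⟩ := hδ
  have hT0 : (0:ℝ) < T := by linarith
  set x := Real.log T with hxdef
  have hx0 : 0 < x := Real.log_pos hT
  have hTx : T = Real.exp x := (Real.exp_log hT0).symm
  by_cases hx6 : x < 6
  · by_cases hx1 : x < 1
    · -- event is empty
      have hempty : {ω : Ω | ∃ s : ℕ, 1 ≤ s ∧ (s : ℝ) ≤ x ^ 2 ∧
          (∑ i ∈ Finset.range s, M i ω) / s
            + Real.sqrt ((2 / s) * Real.log ((Real.exp 1 * T / s)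
              * (Real.log (T / s) ^ 2 + 1))) - δ ≤ 0} = ∅ := by
        ext ω
        simp only [Set.mem_setOf_eq, Set.mem_empty_iff_false, iff_false]
        rintro ⟨s, hs1, hs2, -⟩
        have : (1:ℝ) ≤ s := by exact_mod_cast hs1
        nlinarith
      rw [hempty]
      simp
    · push_neg at hx1
      refine le_trans prob_le_one ?_
      rw [show (1:ℝ≥0∞) = ENNReal.ofReal 1 by simp]
      apply ENNReal.ofReal_le_ofReal
      rw [le_div_iff₀ hT0, one_mul, hTx]
      exact trivial_case hx1 hx6.le
  · push_neg at hx6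
    -- derived subgaussian facts
    have hint : ∀ i, Integrable (M i) μ := fun i => (hsub i).1
    have hs_int : ∀ i (l : ℝ), Integrable (fun ω => Real.exp (l * M i ω)) μ := by
      intro i l
      have h := ((hsub i).2 l).1
      simpa [hmean i] using h
    have hs_bd : ∀ i (l : ℝ), (∫ ω, Real.exp (l * M i ω) ∂μ) ≤ Real.exp (l ^ 2 / 2) := by
      intro i l
      have h := ((hsub i).2 l).2
      simpa [hmean i] using h
    have hCint : ∀ (t : ℝ) (F : Finset ℕ),
        Integrable (fun ω => Real.exp (t * ∑ i ∈ F, M i ω)) μ :=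
      core_int hmeas hindep hs_int
    have hCmgf := core_mgf hmeas hindep hs_bd
    have hCone : ∀ (t : ℝ) (F : Finset ℕ), 1 ≤ ∫ ω, Real.exp (t * ∑ i ∈ F, M i ω) ∂μ :=
      fun t F => core_one_le hint hmean t F (hCint t F)
    -- numeric setup
    have hx2_36 : (36:ℝ) ≤ x ^ 2 := by nlinarith
    have hquart := exp_ge_quartic hx0.le
    have hx2T : 7 / 6 * x ^ 2 ≤ T := by rw [hTx]; nlinarith
    set q := Nat.floor x with hqdef
    have hq6 : 6 ≤ q := Nat.le_floor (by exact_mod_cast hx6)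
    have hq1 : 1 ≤ q := by omega
    have hqx : (q:ℝ) ≤ x := Nat.floor_le hx0.le
    have hq6R : (6:ℝ) ≤ q := by exact_mod_cast hq6
    have hq0R : (0:ℝ) < q := by linarith
    have hxq : x - 1 ≤ q := by linarith [Nat.lt_floor_add_one x]
    set n := Nat.floor (x ^ 2) with hndef
    have hn1 : 1 ≤ n := Nat.le_floor (by push_cast; nlinarith)
    have hnx : (n:ℝ) ≤ x ^ 2 := Nat.floor_le (by positivity)
    set U : ℕ → ℕ := useq q with hUdef
    have hKex : ∃ k, n < U k := ⟨n, lt_of_lt_of_le (Nat.lt_succ_self n) (useq_ge q n)⟩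
    set K := Nat.find hKex with hKdef
    have hUK : n < U K := Nat.find_spec hKex
    have hK1 : 1 ≤ K := by
      rcases Nat.eq_zero_or_pos K with h0 | h
      · exfalso
        rw [h0] at hUK
        have : U 0 = 1 := useq_zero q
        omega
      · exact h
    set mk : ℕ → ℕ := fun k => U (k + 1) - 1 with hmkdef
    set ak : ℕ → ℝ := fun k =>
      Real.sqrt (2 * (U k) * Lf T (mk k)) - (mk k) * δ with hakdef
    set D : ℕ → Set Ω := fun k => {ω | ∃ s, 1 ≤ s ∧ s ≤ mk k ∧
      (∑ i ∈ Finset.range s, M i ω) ≤ -(ak k)} with hDdef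
    have h16 : 1 + 1 / (q:ℝ) ≤ 7 / 6 := by
      have : 1 / (q:ℝ) ≤ 1 / 6 := by
        apply one_div_le_one_div_of_le (by norm_num) hq6R
      linarith
    -- per-block facts
    have hfacts : ∀ k, k < K → (1 ≤ mk k) ∧ (0 ≤ ak k) ∧
        (Real.exp (-(ak k) ^ 2 / (2 * (mk k : ℝ))) ≤
          Real.exp (5 / 2) * ((100 / 9) * (mk k : ℝ) / (Real.exp 1 * T * x ^ 2))) ∧
        ((mk k : ℝ) ≤ (1 + 1 / (q:ℝ)) * (U k : ℝ)) ∧ ((mk k : ℝ) ≤ 7 / 6 * x ^ 2) := by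
      intro k hk
      have hUkn : U k ≤ n := not_lt.mp (Nat.find_min hKex hk)
      have hUpos : 1 ≤ U k := useq_pos q k
      have hUlt : U k < U (k + 1) := useq_strictMono q (Nat.lt_succ_self k)
      have hmk1 : 1 ≤ mk k := by
        simp only [hmkdef]
        omega
      have hcast : (mk k : ℝ) = (U (k + 1) : ℝ) - 1 := by
        simp only [hmkdef]
        rw [Nat.cast_sub (by omega)]
        norm_num
      have hm_le : (mk k : ℝ) ≤ (1 + 1 / (q:ℝ)) * (U k : ℝ) := by
        rw [hcast]; exact useq_m_le q k hq1
      have hum : (U k : ℝ) ≤ (mk k : ℝ) := by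
        have : U k ≤ mk k := by simp only [hmkdef]; omega
        exact_mod_cast this
      have hUk_x2 : (U k : ℝ) ≤ x ^ 2 := le_trans (by exact_mod_cast hUkn) hnx
      have hm_n : (mk k : ℝ) ≤ 7 / 6 * x ^ 2 := by
        have hU0 : (0:ℝ) ≤ (U k : ℝ) := Nat.cast_nonneg _
        calc (mk k : ℝ) ≤ (1 + 1 / (q:ℝ)) * (U k : ℝ) := hm_le
          _ ≤ (7 / 6) * x ^ 2 := by nlinarith
      have hU1R : (1:ℝ) ≤ (U k : ℝ) := by exact_mod_cast hUpos
      obtain ⟨ha0, hbb⟩ := block_bound hx6 hTx hδ0 hδ2 hxq hU1R hum hm_le hUk_x2 hm_n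
      exact ⟨hmk1, ha0, hbb, hm_le, hm_n⟩
    -- measure of blocks
    have hDk : ∀ k, k < K → μ (D k) ≤
        ENNReal.ofReal (Real.exp (-((ak k) ^ 2) / (2 * (mk k : ℕ)))) := by
      intro k hk
      obtain ⟨hmk1, ha0, -, -, -⟩ := hfacts k hk
      exact core_maximal hmeas hindep hint hmean hs_int hs_bd (mk k) hmk1 (ak k) ha0
        hCint hCmgf hCone (fun s m a t B hB => core_indep hmeas hindep s m a t B hB)
    -- coverage
    have hcover : {ω : Ω | ∃ s : ℕ, 1 ≤ s ∧ (s : ℝ) ≤ x ^ 2 ∧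
        (∑ i ∈ Finset.range s, M i ω) / s
          + Real.sqrt ((2 / s) * Real.log ((Real.exp 1 * T / s)
            * (Real.log (T / s) ^ 2 + 1))) - δ ≤ 0}
        ⊆ ⋃ k ∈ Finset.range K, D k := by
      intro ω hω
      obtain ⟨s, hs1, hs2, hs3⟩ := hω
      have hs0 : (0:ℝ) < s := by exact_mod_cast hs1
      have hs1R : (1:ℝ) ≤ s := by exact_mod_cast hs1
      have hsn : s ≤ n := Nat.le_floor hs2
      have hjex : ∃ j, s < U j := ⟨s, lt_of_lt_of_le (Nat.lt_succ_self s) (useq_ge q s)⟩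
      have hj_spec : s < U (Nat.find hjex) := Nat.find_spec hjex
      have hj1 : 1 ≤ Nat.find hjex := by
        rcases Nat.eq_zero_or_pos (Nat.find hjex) with h0 | h
        · exfalso
          rw [h0] at hj_spec
          have : U 0 = 1 := useq_zero q
          omega
        · exact h
      set k := Nat.find hjex - 1 with hkdef
      have hk1 : k + 1 = Nat.find hjex := by omega
      have hks : U k ≤ s := not_lt.mp (Nat.find_min hjex (by omega))
      have hsk : s ≤ mk k := by
        have hlt : s < U (k + 1) := by rw [hk1]; exact hj_spec
        simp only [hmkdef]
        omega
      have hkK : k < K := by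
        by_contra h
        push_neg at h
        have : U K ≤ U k := (useq_strictMono q).monotone h
        omega
      obtain ⟨hmk1, ha0, -, -, hm_n⟩ := hfacts k hkK
      refine Set.mem_biUnion (Finset.mem_range.mpr hkK) ⟨s, hs1, hsk, ?_⟩
      -- analytic step
      have hsm : (s:ℝ) ≤ (mk k : ℝ) := by exact_mod_cast hsk
      have hmT : (mk k : ℝ) ≤ T := le_trans hm_n hx2T
      have hmk1R : (1:ℝ) ≤ (mk k : ℝ) := by exact_mod_cast hmk1
      have hLanti : Lf T (mk k) ≤ Lf T s := Lf_anti hT0 hs1R hsm hmT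
      have hLmk1 : 1 ≤ Lf T (mk k) := Lf_ge_one hmk1R hmT
      have hsqrt_mono : Real.sqrt (2 * (U k : ℝ) * Lf T (mk k))
          ≤ Real.sqrt (2 * (s:ℝ) * Lf T s) := by
        apply Real.sqrt_le_sqrt
        have hUks : (U k : ℝ) ≤ (s:ℝ) := by exact_mod_cast hks
        have hU0 : (0:ℝ) < (U k : ℝ) := by
          have := useq_pos q k; exact_mod_cast Nat.lt_of_lt_of_le Nat.zero_lt_one this
        nlinarith
      have hLrfl : Real.log ((Real.exp 1 * T / s) * (Real.log (T / s) ^ 2 + 1))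
          = Lf T s := rfl
      rw [hLrfl] at hs3
      have hmul : (s:ℝ) * Real.sqrt (2 / s * Lf T s) = Real.sqrt (2 * s * Lf T s) := by
        rw [show (s:ℝ) * Real.sqrt (2 / s * Lf T s)
            = Real.sqrt ((s:ℝ) ^ 2) * Real.sqrt (2 / s * Lf T s) by
          rw [Real.sqrt_sq hs0.le]]
        rw [← Real.sqrt_mul (by positivity)]
        congr 1
        field_simp
      have hdiv : (s:ℝ) * ((∑ i ∈ Finset.range s, M i ω) / s)
          = ∑ i ∈ Finset.range s, M i ω := by field_simp
      have hs3' : (∑ i ∈ Finset.range s, M i ω)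
          ≤ s * δ - Real.sqrt (2 * s * Lf T s) := by
        have h := mul_le_mul_of_nonneg_left hs3 hs0.le
        rw [mul_zero] at h
        nlinarith [hmul, hdiv]
      have hsd : (s:ℝ) * δ ≤ (mk k : ℝ) * δ := mul_le_mul_of_nonneg_right hsm hδ0.le
      show (∑ i ∈ Finset.range s, M i ω) ≤ -(ak k)
      have hak : ak k = Real.sqrt (2 * (U k : ℝ) * Lf T (mk k)) - (mk k : ℝ) * δ := rfl
      rw [hak]
      push_cast
      linarith
    -- sum everything
    set C : ℝ := Real.exp (5 / 2) * (100 / 9) / (Real.exp 1 * T * x ^ 2) with hCdef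
    have hsum_mk : ∑ k ∈ Finset.range K, (mk k : ℝ) ≤ 49 / 36 * x ^ 3 := by
      have hstep1 : ∑ k ∈ Finset.range K, (mk k : ℝ)
          ≤ (1 + 1 / (q:ℝ)) * ∑ k ∈ Finset.range K, (U k : ℝ) := by
        rw [Finset.mul_sum]
        refine Finset.sum_le_sum (fun k hk => ?_)
        exact (hfacts k (Finset.mem_range.mp hk)).2.2.2.1
      have hstep2 : ∑ k ∈ Finset.range K, (U k : ℝ) ≤ (q:ℝ) * ((U K : ℝ) - 1) := by
        have h1 : ∑ k ∈ Finset.range K, (U k : ℝ)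
            ≤ ∑ k ∈ Finset.range K, (q:ℝ) * ((U (k + 1) : ℝ) - (U k : ℝ)) :=
          Finset.sum_le_sum (fun k _ => useq_incr_le q k hq1)
        have h2 : ∑ k ∈ Finset.range K, ((U (k + 1) : ℝ) - (U k : ℝ))
            = (U K : ℝ) - (U 0 : ℝ) := Finset.sum_range_sub (fun k => ((U k : ℕ) : ℝ)) K
        have h3 : (U 0 : ℝ) = 1 := by rw [show U 0 = 1 from useq_zero q]; norm_num
        rw [← Finset.mul_sum, h2, h3] at h1
        exact h1
      have hstep3 : (U K : ℝ) - 1 ≤ 7 / 6 * x ^ 2 := by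
        have hKm : K - 1 < K := by omega
        obtain ⟨-, -, -, -, hm_n⟩ := hfacts (K - 1) hKm
        have hcast : (mk (K - 1) : ℝ) = (U K : ℝ) - 1 := by
          have hUlt : U (K - 1) < U ((K - 1) + 1) := useq_strictMono q (Nat.lt_succ_self _)
          have hKK : (K - 1) + 1 = K := by omega
          simp only [hmkdef]
          rw [hKK] at hUlt ⊢
          rw [Nat.cast_sub (by omega)]
          norm_num
        rw [← hcast]
        exact hm_n
      have hq_x : (q:ℝ) ≤ x := hqx
      calc ∑ k ∈ Finset.range K, (mk k : ℝ)
          ≤ (1 + 1 / (q:ℝ)) * ∑ k ∈ Finset.range K, (U k : ℝ) := hstep1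
        _ ≤ (1 + 1 / (q:ℝ)) * ((q:ℝ) * ((U K : ℝ) - 1)) :=
            mul_le_mul_of_nonneg_left hstep2 (by positivity)
        _ = ((q:ℝ) + 1) * ((U K : ℝ) - 1) := by field_simp
        _ ≤ 49 / 36 * x ^ 3 := by
            have hUK1 : (0:ℝ) ≤ (U K : ℝ) - 1 := by
              have h := useq_pos q K
              have h' : (1:ℝ) ≤ (U K : ℝ) := by exact_mod_cast h
              linarith
            have hq1x : (q:ℝ) + 1 ≤ 7 / 6 * x := by linarith
            have hmm := mul_le_mul hq1x hstep3 hUK1 (by linarith : (0:ℝ) ≤ 7 / 6 * x)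
            nlinarith [hmm]
    have hsumfinal : ∑ k ∈ Finset.range K, Real.exp (-((ak k) ^ 2) / (2 * (mk k : ℕ)))
        ≤ 16 * Real.exp 2 * x / T := by
      have h1 : ∑ k ∈ Finset.range K, Real.exp (-((ak k) ^ 2) / (2 * (mk k : ℕ)))
          ≤ ∑ k ∈ Finset.range K, C * (mk k : ℝ) := by
        refine Finset.sum_le_sum (fun k hk => ?_)
        obtain ⟨-, -, hbb, -, -⟩ := hfacts k (Finset.mem_range.mp hk)
        calc Real.exp (-((ak k) ^ 2) / (2 * (mk k : ℕ)))
            ≤ Real.exp (5 / 2) * ((100 / 9) * (mk k : ℝ) / (Real.exp 1 * T * x ^ 2)) := hbb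
          _ = C * (mk k : ℝ) := by rw [hCdef]; field_simp
      have h2 : ∑ k ∈ Finset.range K, C * (mk k : ℝ) = C * ∑ k ∈ Finset.range K, (mk k : ℝ) :=
        (Finset.mul_sum _ _ _).symm
      have hCpos : 0 < C := by rw [hCdef]; positivity
      have h3 : C * ∑ k ∈ Finset.range K, (mk k : ℝ) ≤ C * (49 / 36 * x ^ 3) :=
        mul_le_mul_of_nonneg_left hsum_mk hCpos.le
      have hc : Real.exp (5 / 2) * (100 / 9) * (49 / 36) ≤ 16 * Real.exp 2 * Real.exp 1 := by
        have hee : Real.exp (5 / 2) ≤ Real.exp 3 := Real.exp_le_exp.mpr (by norm_num)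
        have h3e : Real.exp 1 * Real.exp 2 = Real.exp 3 := by
          rw [← Real.exp_add]; norm_num
        nlinarith [Real.exp_pos 3]
      have h4 : C * (49 / 36 * x ^ 3) ≤ 16 * Real.exp 2 * x / T := by
        rw [hCdef]
        rw [div_mul_eq_mul_div, div_le_div_iff₀ (by positivity) hT0]
        have hgoal : Real.exp (5 / 2) * (100 / 9) * (49 / 36 * x ^ 3) * T
            = (Real.exp (5 / 2) * (100 / 9) * (49 / 36)) * (x ^ 3 * T) := by ring
        have hgoal2 : 16 * Real.exp 2 * x * (Real.exp 1 * T * x ^ 2)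
            = (16 * Real.exp 2 * Real.exp 1) * (x ^ 3 * T) := by ring
        rw [hgoal, hgoal2]
        apply mul_le_mul_of_nonneg_right hc (by positivity)
      linarith
    calc μ {ω : Ω | ∃ s : ℕ, 1 ≤ s ∧ (s : ℝ) ≤ x ^ 2 ∧
        (∑ i ∈ Finset.range s, M i ω) / s
          + Real.sqrt ((2 / s) * Real.log ((Real.exp 1 * T / s)
            * (Real.log (T / s) ^ 2 + 1))) - δ ≤ 0}
        ≤ μ (⋃ k ∈ Finset.range K, D k) := measure_mono hcover
      _ ≤ ∑ k ∈ Finset.range K, μ (D k) := measure_biUnion_finset_le _ _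
      _ ≤ ∑ k ∈ Finset.range K,
          ENNReal.ofReal (Real.exp (-((ak k) ^ 2) / (2 * (mk k : ℕ)))) :=
          Finset.sum_le_sum (fun k hk => hDk k (Finset.mem_range.mp hk))
      _ = ENNReal.ofReal (∑ k ∈ Finset.range K,
          Real.exp (-((ak k) ^ 2) / (2 * (mk k : ℕ)))) :=
          (ENNReal.ofReal_sum_of_nonneg (fun k _ => (Real.exp_pos _).le)).symm
      _ ≤ ENNReal.ofReal (16 * Real.exp 2 * x / T) := ENNReal.ofReal_le_ofReal hsumfinal
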